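/- Let n, d ≥ 1 and let P ∈ ℝ^{n×n} be symmetric, doubly stochastic and positive semidefinite, and let σ2 ∈ [0,1) be such that every eigenvalue of P associated with an eigenvector orthogonal to the all-ones vector lies in [0, σ2]. Set θ = 1/(1+√(1−σ2²)). Let X^{−1} = X^0 ∈ ℝ^{n×d} and define X^{k+1} = (1+θ)·P·X^k − θ·X^{k−1} for k = 0, 1, 2, …, and let X̄ = (1/n)·1·1ᵀ·X^0. Then for every integer L ≥ 1: ‖X^L − X̄‖_F ≤ √14 · (1 − (1 − 1/√2)·√(1−σ2))^L · ‖X^0 − X̄‖_F. -/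

import Mathlib

/-!
Statement 0 (Lemma 1, accelerated gossip / Chebyshev acceleration convergence):
for a symmetric, doubly stochastic, positive semidefinite gossip matrix `P` whose
eigenvalues on the orthogonal complement of the all-ones vector lie in `[0, σ2]`
with `σ2 < 1`, the iterates `X^{k+1} = (1+θ)·P·X^k − θ·X^{k−1}` (with
`θ = 1/(1+√(1−σ2²))`, `X^{−1} = X^0`) satisfy
`‖X^L − X̄‖_F ≤ √14 · (1 − (1 − 1/√2)·√(1−σ2))^L · ‖X^0 − X̄‖_F` for all `L ≥ 1`.
-/

open scoped BigOperators
open Finset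

noncomputable section

/-- Frobenius norm of an `n × d` real matrix. -/
def frobNorm {n d : ℕ} (A : Matrix (Fin n) (Fin d) ℝ) : ℝ :=
  Real.sqrt (∑ i, ∑ j, (A i j) ^ 2)


private lemma aux_le_one (x : ℝ) (h0 : 0 ≤ x) (h1 : x ^ 2 ≤ 1) : x ≤ 1 := by nlinarith

private lemma aux_xmlt (s xm : ℝ) (hs : 0 < s) (hs1 : s ≤ 1)
    (h : 4 * xm ^ 2 = (2 + s) ^ 2 * (1 - s)) : xm ^ 2 < 1 := by
  nlinarith [mul_pos hs hs, mul_pos (mul_pos hs hs) hs]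

private lemma aux_poly1 (t σ2 : ℝ) (ht : 0 < t) (hge : 1 - t ^ 2 ≤ σ2) :
    (7:ℝ)/2 * (2+t)^2 * (1-t) * (1+t) - (2+t) * σ2 + 1 - 13 * (1+t) ≤ 0 := by
  have h5 : (2+t) * (1 - t^2) ≤ (2+t) * σ2 :=
    mul_le_mul_of_nonneg_left hge (by linarith)
  nlinarith [mul_nonneg ht.le ht.le, mul_nonneg (mul_nonneg ht.le ht.le) ht.le,
    mul_nonneg (mul_nonneg ht.le ht.le) (mul_nonneg ht.le ht.le)]

private lemma aux_quad (r θ x xm : ℝ) (hθ13 : θ ≤ 13) (hx0 : 0 ≤ x) (hxm : x ≤ xm)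
    (hqm : 14 * xm^2 - 2 * (r * xm) + θ - 13 ≤ 0) :
    14 * x^2 - 2 * r * x + θ - 13 ≤ 0 := by
  rcases le_or_gt xm 0 with h | hxmpos
  · have hx00 : x = 0 := le_antisymm (le_trans hxm h) hx0
    rw [hx00]; nlinarith
  · have idq : xm * (14 * x ^ 2 - 2 * r * x + θ - 13)
        = (xm - x) * (θ - 13) + x * (14 * xm ^ 2 - 2 * (r * xm) + θ - 13)
          - 14 * x * xm * (xm - x) := by ring
    have t1 : (xm - x) * (θ - 13) ≤ 0 :=
      mul_nonpos_of_nonneg_of_nonpos (by linarith) (by linarith)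
    have t2 : x * (14 * xm ^ 2 - 2 * (r * xm) + θ - 13) ≤ 0 :=
      mul_nonpos_of_nonneg_of_nonpos hx0 hqm
    have t3 : 0 ≤ 14 * x * xm * (xm - x) :=
      mul_nonneg (by positivity) (by linarith)
    have hmul : xm * (14 * x ^ 2 - 2 * r * x + θ - 13) ≤ 0 := by linarith
    by_contra hcon
    push_neg at hcon
    nlinarith [mul_pos hxmpos hcon]

private lemma aux_rate (u t2 : ℝ) (hu0 : 0 ≤ u) (hu1 : u ≤ 1) (ht2 : t2^2 = 2)
    (ht2pos : 0 < t2) :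
    1 ≤ (1 - (1 - t2/2) * u)^2 * (1 + u) := by
  have h54 : (5:ℝ)/4 ≤ t2 := by nlinarith
  have hthird : 0 ≤ t2 - 1 - (3/2 - t2) * u := by
    nlinarith [mul_nonneg (by linarith : (0:ℝ) ≤ 1 - u) (by linarith : (0:ℝ) ≤ t2 - 1),
      mul_nonneg hu0 (by linarith : (0:ℝ) ≤ 2*t2 - 5/2)]
  have hprod : 0 ≤ u * (1-u) * (t2 - 1 - (3/2 - t2)*u) :=
    mul_nonneg (mul_nonneg hu0 (by linarith)) hthird
  have hid : (1 - (1 - t2/2)*u)^2*(1+u) - 1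
      = u*(1-u)*(t2-1-(3/2-t2)*u) + (t2^2 - 2)*((u^2+u^3)/4) := by ring
  have hz : (t2^2 - 2)*((u^2+u^3)/4) = 0 := by
    rw [show t2^2 - 2 = (0:ℝ) from by linarith]; ring
  linarith [hid, hprod, hz]

private lemma aux_t2lt2 (t2 : ℝ) (h : t2^2 = 2) (h0 : 0 < t2) : t2 < 2 := by nlinarith

set_option maxHeartbeats 1000000 in
lemma gossip_scalar (σ2 : ℝ) (hσ0 : 0 ≤ σ2) (hσ1 : σ2 < 1)
    (θ : ℝ) (hθ : θ = 1 / (1 + Real.sqrt (1 - σ2 ^ 2)))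
    (lam : ℝ) (hl0 : 0 ≤ lam) (hl1 : lam ≤ σ2)
    (A : ℕ → ℝ)
    (hA1 : A 1 = ((1 + θ) * lam - θ) * A 0)
    (hArec : ∀ k : ℕ, A (k + 2) = (1 + θ) * lam * A (k + 1) - θ * A k)
    (L : ℕ) :
    (A L) ^ 2 ≤ 14 * ((1 - (1 - 1 / Real.sqrt 2) * Real.sqrt (1 - σ2)) ^ L) ^ 2 * (A 0) ^ 2 := by
  have hσ2lt : σ2 ^ 2 < 1 := by
    have : σ2 ^ 2 ≤ σ2 * 1 := by
      rw [pow_two]; exact mul_le_mul_of_nonneg_left hσ1.le hσ0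
    linarith
  set s := Real.sqrt (1 - σ2 ^ 2) with hs
  have hs2 : s ^ 2 = 1 - σ2 ^ 2 := Real.sq_sqrt (by linarith)
  have hspos : 0 < s := Real.sqrt_pos.2 (by linarith)
  have hsle : s ≤ 1 := aux_le_one s hspos.le (by linarith [sq_nonneg σ2])
  have hσs : σ2 ^ 2 = 1 - s ^ 2 := by linarith
  have hθpos : 0 < θ := by rw [hθ]; positivity
  have hθval : θ * (1 + s) = 1 := by rw [hθ]; field_simp
  have h1θ : 1 + θ = θ * (2 + s) := by linear_combination -hθval
  have hθle : θ ≤ 1 := by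
    have := mul_nonneg hθpos.le hspos.le
    linarith [hθval]
  set r := Real.sqrt θ with hr
  have hr2 : r ^ 2 = θ := Real.sq_sqrt hθpos.le
  have hrpos : 0 < r := Real.sqrt_pos.2 hθpos
  set x := (1 + θ) * lam / (2 * r) with hxdef
  set xm := (1 + θ) * σ2 / (2 * r) with hxmdef
  have hx0 : 0 ≤ x := by positivity
  have hxm0 : 0 ≤ xm := by positivity
  have hxlexm : x ≤ xm :=
    div_le_div_of_nonneg_right
      (mul_le_mul_of_nonneg_left hl1 (by linarith)) (by positivity)
  -- closed forms for xm
  have h4 : xm ^ 2 * (4 * θ) = ((1 + θ) * σ2) ^ 2 := by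
    have h2r : (2 * r) ^ 2 = 4 * θ := by rw [mul_pow, hr2]; ring
    rw [hxmdef, div_pow, h2r, div_mul_cancel₀]
    positivity
  have h4xm : 4 * xm ^ 2 = (2 + s) ^ 2 * (1 - s) := by
    have key : θ * (4 * xm ^ 2) = θ * ((2 + s) ^ 2 * (1 - s)) := by
      linear_combination h4 + (1 + θ) ^ 2 * hσs + (1 - s ^ 2) * (1 + θ + θ * (2 + s)) * h1θ
        + θ * (2 + s) ^ 2 * (1 - s) * hθval
    exact mul_left_cancel₀ hθpos.ne' key
  have hrxm : r * xm = (1 + θ) * σ2 / 2 := by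
    rw [hxmdef]
    field_simp
  have hrxm2 : 2 * (r * xm) * (1 + s) = (2 + s) * σ2 := by
    linear_combination (2 * (1 + s)) * hrxm + σ2 * hθval
  have h2rx : 2 * r * x = (1 + θ) * lam := by
    rw [hxdef]
    field_simp
  -- x^2 < 1
  have hxm2lt : xm ^ 2 < 1 := aux_xmlt s xm hspos hsle h4xm
  have hx2lt : x ^ 2 < 1 := lt_of_le_of_lt (pow_le_pow_left₀ hx0 hxlexm 2) hxm2lt
  have hxle1 : x ≤ 1 := aux_le_one x hx0 hx2lt.le
  -- angle
  set φ := Real.arccos x with hφ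
  have hcos : Real.cos φ = x := Real.cos_arccos (by linarith) hxle1
  have hsin2 : (Real.sin φ) ^ 2 = 1 - x ^ 2 := by
    rw [hφ, Real.sin_arccos]; exact Real.sq_sqrt (by linarith)
  have hsinpos : 0 < Real.sin φ := by
    rw [hφ, Real.sin_arccos]; exact Real.sqrt_pos.2 (by linarith)
  set cv := (x - r) / Real.sin φ with hcv
  have hcsin : cv * Real.sin φ = x - r := div_mul_cancel₀ _ hsinpos.ne'
  -- quadratic endpoint bound
  have hσ2ge : 1 - s ^ 2 ≤ σ2 := by
    have hh := mul_nonneg hσ0 (by linarith : (0:ℝ) ≤ 1 - σ2)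
    linarith [hσs, hh]
  have hqm : 14 * xm ^ 2 - 2 * (r * xm) + θ - 13 ≤ 0 := by
    have hL : (14 * xm ^ 2 - 2 * (r * xm) + θ - 13) * (1 + s)
        = (7:ℝ)/2 * (2+s)^2 * (1-s) * (1+s) - (2+s) * σ2 + 1 - 13 * (1+s) := by
      linear_combination ((7:ℝ)/2 * (1+s)) * h4xm - hrxm2 + hθval
    have h7 : (14 * xm ^ 2 - 2 * (r * xm) + θ - 13) * (1 + s) ≤ 0 := by
      rw [hL]; exact aux_poly1 s σ2 hspos hσ2ge
    by_contra hcon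
    push_neg at hcon
    have h8 := mul_pos hcon (show (0:ℝ) < 1 + s by linarith)
    linarith
  have hq : 14 * x ^ 2 - 2 * r * x + θ - 13 ≤ 0 :=
    aux_quad r θ x xm (by linarith) hx0 hxlexm hqm
  have hc2 : cv ^ 2 ≤ 13 := by
    have h2 : cv ^ 2 * (1 - x ^ 2) = (x - r) ^ 2 := by
      rw [← hsin2]; linear_combination (cv * Real.sin φ + (x - r)) * hcsin
    have hexp : (x - r) ^ 2 = x ^ 2 - 2 * r * x + θ := by linear_combination hr2
    have h3 : (x - r) ^ 2 ≤ 13 * (1 - x ^ 2) := by linarith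
    by_contra hcon
    push_neg at hcon
    have := mul_lt_mul_of_pos_right hcon (show (0:ℝ) < 1 - x ^ 2 by linarith)
    linarith
  -- Chebyshev-type recursion for the trigonometric form
  have gcheb : ∀ m : ℝ,
      Real.cos ((m + 1 + 1) * φ) + cv * Real.sin ((m + 1 + 1) * φ)
        = 2 * x * (Real.cos ((m + 1) * φ) + cv * Real.sin ((m + 1) * φ))
          - (Real.cos (m * φ) + cv * Real.sin (m * φ)) := by
    intro m
    have e1 : (m + 1 + 1) * φ = (m + 1) * φ + φ := by ring
    have e2 : m * φ = (m + 1) * φ - φ := by ring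
    rw [e1, e2, Real.cos_add, Real.sin_add, Real.cos_sub, Real.sin_sub, hcos]
    ring
  -- closed form by two-step induction
  have key : ∀ k : ℕ,
      A k = r ^ k * (Real.cos (k * φ) + cv * Real.sin (k * φ)) * A 0 ∧
      A (k + 1) = r ^ (k + 1) * (Real.cos ((k + 1 : ℕ) * φ) + cv * Real.sin ((k + 1 : ℕ) * φ)) * A 0 := by
    intro k
    induction k with
    | zero =>
      constructor
      · norm_num
      · have h1φ : ((0 + 1 : ℕ) : ℝ) * φ = φ := by norm_num
        rw [hA1, h1φ, hcos, hcsin]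
        linear_combination (-(A 0)) * h2rx + A 0 * hr2
    | succ k ih =>
      refine ⟨ih.2, ?_⟩
      have hk2 : A (k + 1 + 1) = (1 + θ) * lam * A (k + 1) - θ * A k := hArec k
      rw [hk2, ih.1, ih.2]
      push_cast
      linear_combination
        (-(r ^ (k+1) * (Real.cos (((k:ℝ) + 1) * φ) + cv * Real.sin (((k:ℝ) + 1) * φ)) * A 0)) * h2rx
        + (r ^ k * (Real.cos ((k:ℝ) * φ) + cv * Real.sin ((k:ℝ) * φ)) * A 0) * hr2
        + (-(r ^ (k + 2) * A 0)) * gcheb (k : ℝ)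
  -- rate comparison
  set u := Real.sqrt (1 - σ2) with hu
  have hu2 : u ^ 2 = 1 - σ2 := Real.sq_sqrt (by linarith)
  have hu0 : 0 ≤ u := Real.sqrt_nonneg _
  have hu1 : u ≤ 1 := aux_le_one u hu0 (by linarith)
  have hsu : u ≤ s := by
    apply Real.sqrt_le_sqrt
    have hh := mul_nonneg hσ0 (by linarith : (0:ℝ) ≤ 1 - σ2)
    linarith [hh]
  set t2 := Real.sqrt 2 with ht2def
  have ht2 : t2 ^ 2 = 2 := Real.sq_sqrt (by norm_num)
  have ht2pos : 0 < t2 := Real.sqrt_pos.2 (by norm_num)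
  have ht2lt2 : t2 < 2 := aux_t2lt2 t2 ht2 ht2pos
  have hinv : 1 / t2 = t2 / 2 := by
    rw [div_eq_div_iff ht2pos.ne' (two_ne_zero)]
    linear_combination -ht2
  set rate := 1 - (1 - 1 / t2) * u with hrate
  have hrate_eq : rate = 1 - (1 - t2 / 2) * u := by rw [hrate, hinv]
  have hratepos : 0 < rate := by
    rw [hrate_eq]
    have h1 : (1 - t2/2) * u ≤ (1 - t2/2) * 1 :=
      mul_le_mul_of_nonneg_left hu1 (by linarith)
    linarith
  have hrate2 : 1 ≤ rate ^ 2 * (1 + u) := by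
    rw [hrate_eq]; exact aux_rate u t2 hu0 hu1 ht2 ht2pos
  have hθrate : θ ≤ rate ^ 2 := by
    have h1 : θ * (1 + u) ≤ θ * (1 + s) :=
      mul_le_mul_of_nonneg_left (by linarith) hθpos.le
    by_contra hcon
    push_neg at hcon
    have h2 := mul_lt_mul_of_pos_right hcon (show (0:ℝ) < 1 + u by linarith)
    linarith
  have hrrate : r ≤ rate := by
    have h1 := Real.sqrt_le_sqrt hθrate
    rwa [← hr, Real.sqrt_sq hratepos.le] at h1
  -- finish
  have hformL := (key L).1
  have hg2 : (Real.cos (L * φ) + cv * Real.sin (L * φ)) ^ 2 ≤ 14 := by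
    have hid : (Real.cos (L * φ) + cv * Real.sin (L * φ)) ^ 2
        + (Real.sin (L * φ) - cv * Real.cos (L * φ)) ^ 2
        = (1 + cv ^ 2) * ((Real.sin (L * φ)) ^ 2 + (Real.cos (L * φ)) ^ 2) := by ring
    rw [Real.sin_sq_add_cos_sq, mul_one] at hid
    linarith [sq_nonneg (Real.sin (L * φ) - cv * Real.cos (L * φ))]
  have hpow : r ^ L ≤ rate ^ L := pow_le_pow_left₀ hrpos.le hrrate L
  have hpow2 : (r ^ L) ^ 2 ≤ (rate ^ L) ^ 2 :=
    pow_le_pow_left₀ (pow_nonneg hrpos.le L) hpow 2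
  have hA2 : (A L) ^ 2 = (r ^ L) ^ 2 * (Real.cos (L * φ) + cv * Real.sin (L * φ)) ^ 2 * (A 0) ^ 2 := by
    rw [hformL]; ring
  calc (A L) ^ 2
      = (r ^ L) ^ 2 * (Real.cos (L * φ) + cv * Real.sin (L * φ)) ^ 2 * (A 0) ^ 2 := hA2
    _ ≤ (rate ^ L) ^ 2 * 14 * (A 0) ^ 2 := by
        apply mul_le_mul_of_nonneg_right _ (sq_nonneg (A 0))
        have h8 : (r ^ L) ^ 2 * (Real.cos (L * φ) + cv * Real.sin (L * φ)) ^ 2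
            ≤ (r ^ L) ^ 2 * 14 := mul_le_mul_of_nonneg_left hg2 (sq_nonneg _)
        have h9 : (r ^ L) ^ 2 * 14 ≤ (rate ^ L) ^ 2 * 14 := by linarith
        linarith
    _ = 14 * (rate ^ L) ^ 2 * (A 0) ^ 2 := by ring

set_option maxHeartbeats 1000000 in
theorem statement_0 (n d : ℕ) (hn : 1 ≤ n) (hd : 1 ≤ d)
    (P : Matrix (Fin n) (Fin n) ℝ)
    (hPsymm : P.IsSymm)
    (hPnonneg : ∀ i j, 0 ≤ P i j)
    (hProw : ∀ i, ∑ j, P i j = 1)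
    (hPcol : ∀ j, ∑ i, P i j = 1)
    (hPpsd : P.PosSemidef)
    (σ2 : ℝ) (hσ0 : 0 ≤ σ2) (hσ1 : σ2 < 1)
    (heig : ∀ (μ : ℝ) (v : Fin n → ℝ), v ≠ 0 → (∑ i, v i) = 0 →
      P.mulVec v = μ • v → 0 ≤ μ ∧ μ ≤ σ2)
    (θ : ℝ) (hθ : θ = 1 / (1 + Real.sqrt (1 - σ2 ^ 2)))
    (X : ℤ → Matrix (Fin n) (Fin d) ℝ)
    (hinit : X (-1) = X 0)
    (hrec : ∀ k : ℤ, 0 ≤ k → X (k + 1) = (1 + θ) • (P * X k) - θ • X (k - 1))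
    (Xbar : Matrix (Fin n) (Fin d) ℝ)
    (hXbar : ∀ i j, Xbar i j = (1 / (n : ℝ)) * ∑ i', X 0 i' j)
    (L : ℕ) (hL : 1 ≤ L) :
    frobNorm (X L - Xbar) ≤
      Real.sqrt 14 * (1 - (1 - 1 / Real.sqrt 2) * Real.sqrt (1 - σ2)) ^ L *
        frobNorm (X 0 - Xbar) := by
  have hnR : (0:ℝ) < n := by exact_mod_cast hn
  set rate := 1 - (1 - 1 / Real.sqrt 2) * Real.sqrt (1 - σ2) with hrate
  -- rate is nonnegative
  have hsqrt2 : (1:ℝ) ≤ Real.sqrt 2 := by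
    have h := Real.sqrt_le_sqrt (show (1:ℝ) ≤ 2 by norm_num)
    rwa [Real.sqrt_one] at h
  have hs2pos : (0:ℝ) < Real.sqrt 2 := by linarith
  have hrate0 : 0 ≤ rate := by
    have h1 : Real.sqrt (1 - σ2) ≤ 1 := Real.sqrt_le_one.mpr (by linarith)
    have h2 : 1 / Real.sqrt 2 ≤ 1 := by rw [div_le_one hs2pos]; exact hsqrt2
    have h3 : 0 ≤ 1 / Real.sqrt 2 := by positivity
    have h4 : (1 - 1 / Real.sqrt 2) * Real.sqrt (1 - σ2) ≤ (1 - 1 / Real.sqrt 2) * 1 :=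
      mul_le_mul_of_nonneg_left h1 (by linarith)
    rw [hrate]; linarith
  -- Hermitian structure
  have hP : P.IsHermitian := by
    show P.conjTranspose = P
    rw [Matrix.conjTranspose_eq_transpose_of_trivial]
    exact hPsymm
  set b := hP.eigenvectorBasis with hb
  set μ := hP.eigenvalues with hμ
  have heqv : ∀ i, P.mulVec (b i) = μ i • ⇑(b i) := fun i => hP.mulVec_eigenvectorBasis i
  have hsym : ∀ t u, P u t = P t u := fun t u => congrFun (congrFun hPsymm t) u
  -- row sums: P fixes constant vectors
  have hP1 : ∀ c : ℝ, P.mulVec (fun _ => c) = fun _ => c := by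
    intro c
    funext u
    simp only [Matrix.mulVec, dotProduct]
    rw [← Finset.sum_mul, hProw, one_mul]
  -- column sums: mulVec preserves total sum
  have hPsum : ∀ v : Fin n → ℝ, ∑ t, (P.mulVec v) t = ∑ t, v t := by
    intro v
    simp only [Matrix.mulVec, dotProduct]
    rw [Finset.sum_comm]
    apply Finset.sum_congr rfl
    intro j _
    rw [← Finset.sum_mul, hPcol, one_mul]
  -- eigenvector classification
  have hclass : ∀ i, (∑ t, b i t = 0 ∧ 0 ≤ μ i ∧ μ i ≤ σ2) ∨ (∀ t, b i t = (∑ u, b i u) / n) := by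
    intro i
    by_cases hsumi : ∑ t, b i t = 0
    · left
      refine ⟨hsumi, heig (μ i) (b i) ?_ hsumi (heqv i)⟩
      exact fun h => (b.orthonormal.ne_zero i) (by simpa using h)
    · right
      set c := (∑ u, b i u) / n with hc
      set w : Fin n → ℝ := fun t => b i t - c with hw
      have hwsum : ∑ t, w t = 0 := by
        simp only [hw, Finset.sum_sub_distrib, Finset.sum_const, Finset.card_univ,
          Fintype.card_fin, nsmul_eq_mul, hc]
        field_simp
        ring
      have hPw : P.mulVec w = fun t => μ i * b i t - c := by
        have : w = (fun t => b i t) - (fun _ => c) := rfl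
        rw [this, Matrix.mulVec_sub, hP1 c]
        funext t
        have := congrFun (heqv i) t
        simp only [Pi.sub_apply, this, Pi.smul_apply, smul_eq_mul]
      have hμ1 : μ i = 1 := by
        have h1 : ∑ t, (P.mulVec w) t = 0 := by rw [hPsum, hwsum]
        have h2 : ∑ t, (μ i * b i t - c) = (μ i - 1) * ∑ t, b i t := by
          rw [Finset.sum_sub_distrib, ← Finset.mul_sum, Finset.sum_const, Finset.card_univ,
            Fintype.card_fin, nsmul_eq_mul, hc]
          field_simp
        rw [hPw, h2] at h1
        rcases mul_eq_zero.1 h1 with h | h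
        · linarith
        · exact absurd h hsumi
      have hPww : P.mulVec w = (1:ℝ) • w := by
        rw [hPw]
        funext t
        simp [hw, hμ1]
      have hw0 : w = 0 := by
        by_contra hw0
        have := heig 1 w hw0 hwsum hPww
        linarith [this.2]
      intro t
      have := congrFun hw0 t
      simp only [hw, Pi.zero_apply] at this
      linarith [this]
  -- the centered iterates
  set Y : ℤ → Matrix (Fin n) (Fin d) ℝ := fun k => X k - Xbar with hY
  have hPXbar : P * Xbar = Xbar := by
    ext t j
    rw [Matrix.mul_apply]
    have : ∀ u, Xbar u j = (1 / (n:ℝ)) * ∑ i', X 0 i' j := fun u => hXbar u j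
    simp_rw [this]
    rw [← Finset.sum_mul, hProw, one_mul]
  have hYinit : Y (-1) = Y 0 := by simp only [hY]; rw [hinit]
  have hYrec : ∀ k : ℤ, 0 ≤ k → ∀ t j,
      Y (k+1) t j = (1+θ) * (∑ u, P t u * Y k u j) - θ * Y (k-1) t j := by
    intro k hk t j
    have e0 := hrec k hk
    have e1 : X (k+1) t j = (1+θ) * (P * X k) t j - θ * X (k-1) t j := by
      rw [e0]; simp [Matrix.sub_apply, Matrix.smul_apply, smul_eq_mul]
    have e2 : ∑ u, P t u * Y k u j = (P * X k) t j - Xbar t j := by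
      have : ∑ u, P t u * Y k u j = ∑ u, (P t u * X k u j - P t u * Xbar u j) := by
        apply Finset.sum_congr rfl
        intro u _
        simp only [hY, Matrix.sub_apply]
        ring
      rw [this, Finset.sum_sub_distrib]
      have h3 : ∑ u, P t u * Xbar u j = (P * Xbar) t j := (Matrix.mul_apply).symm
      rw [h3, hPXbar, Matrix.mul_apply]
    have e3 : Y (k+1) t j = X (k+1) t j - Xbar t j := rfl
    have e4 : Y (k-1) t j = X (k-1) t j - Xbar t j := rfl
    rw [e3, e4, e1, e2]
    ring
  have hYcol : ∀ j, ∑ t, Y 0 t j = 0 := by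
    intro j
    simp only [hY, Matrix.sub_apply, Finset.sum_sub_distrib]
    have : ∀ t : Fin n, Xbar t j = (1 / (n:ℝ)) * ∑ i', X 0 i' j := fun t => hXbar t j
    simp_rw [this]
    rw [Finset.sum_const, Finset.card_univ, Fintype.card_fin, nsmul_eq_mul]
    field_simp
    ring
  -- spectral coefficients
  set a : Fin n → Fin d → ℤ → ℝ := fun i j k => ∑ t, b i t * Y k t j with ha
  have hainit : ∀ i j, a i j (-1) = a i j 0 := by
    intro i j
    simp only [ha, hYinit]
  have harec : ∀ i j (k:ℤ), 0 ≤ k →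
      a i j (k+1) = (1+θ) * μ i * a i j k - θ * a i j (k-1) := by
    intro i j k hk
    have hm : ∑ t, b i t * (∑ u, P t u * Y k u j) = μ i * ∑ u, b i u * Y k u j := by
      calc ∑ t, b i t * (∑ u, P t u * Y k u j)
          = ∑ t, ∑ u, b i t * P t u * Y k u j := by
            apply Finset.sum_congr rfl; intro t _
            rw [Finset.mul_sum]; apply Finset.sum_congr rfl; intro u _; ring
        _ = ∑ u, ∑ t, b i t * P t u * Y k u j := Finset.sum_comm
        _ = ∑ u, (∑ t, P u t * b i t) * Y k u j := by
            apply Finset.sum_congr rfl; intro u _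
            rw [Finset.sum_mul]; apply Finset.sum_congr rfl; intro t _
            rw [hsym t u]; ring
        _ = ∑ u, (μ i * b i u) * Y k u j := by
            apply Finset.sum_congr rfl; intro u _
            have h5 : (P.mulVec (b i)) u = μ i * b i u := by
              rw [heqv i]; simp [smul_eq_mul]
            rw [show ∑ t, P u t * b i t = (P.mulVec (b i)) u from rfl, h5]
        _ = μ i * ∑ u, b i u * Y k u j := by
            rw [Finset.mul_sum]; apply Finset.sum_congr rfl; intro u _; ring
    calc a i j (k+1) = ∑ t, b i t * Y (k+1) t j := rfl
      _ = ∑ t, ((1+θ) * (b i t * (∑ u, P t u * Y k u j)) - θ * (b i t * Y (k-1) t j)) := by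
          apply Finset.sum_congr rfl; intro t _
          rw [hYrec k hk t j]; ring
      _ = (1+θ) * (∑ t, b i t * (∑ u, P t u * Y k u j)) - θ * (∑ t, b i t * Y (k-1) t j) := by
          rw [Finset.sum_sub_distrib, ← Finset.mul_sum, ← Finset.mul_sum]
      _ = (1+θ) * μ i * a i j k - θ * a i j (k-1) := by rw [hm, ha]; ring
  -- per-coefficient decay
  have hbound : ∀ i j, (a i j (L:ℤ))^2 ≤ 14 * (rate ^ L)^2 * (a i j 0)^2 := by
    intro i j
    rcases hclass i with ⟨hsum0, hμ0, hμσ⟩ | hconst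
    · -- eigenvalue in [0, σ2]
      have hA1 : a i j 1 = ((1+θ) * μ i - θ) * a i j 0 := by
        have h0 := harec i j 0 le_rfl
        norm_num at h0
        rw [hainit i j] at h0
        rw [h0]
        ring
      have hArec2 : ∀ k : ℕ, a i j ((k:ℤ) + 2) = (1+θ) * μ i * a i j ((k:ℤ)+1) - θ * a i j k := by
        intro k
        have h0 := harec i j ((k:ℤ)+1) (by omega)
        have e1 : (k:ℤ) + 1 + 1 = (k:ℤ) + 2 := by ring
        have e2 : (k:ℤ) + 1 - 1 = (k:ℤ) := by ring
        rw [e1, e2] at h0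
        exact h0
      have := gossip_scalar σ2 hσ0 hσ1 θ hθ (μ i) hμ0 hμσ (fun m : ℕ => a i j (m:ℤ))
        (by simpa using hA1)
        (by intro k; push_cast; exact hArec2 k) L
      simpa [hrate] using this
    · -- constant eigenvector: coefficients vanish
      have ha0 : a i j 0 = 0 := by
        simp only [ha]
        calc ∑ t, b i t * Y 0 t j = ∑ t, ((∑ u, b i u) / n) * Y 0 t j := by
              apply Finset.sum_congr rfl; intro t _; rw [hconst t]
          _ = ((∑ u, b i u) / n) * ∑ t, Y 0 t j := by rw [Finset.mul_sum]
          _ = 0 := by rw [hYcol j]; ring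
      have hzero : ∀ k : ℕ, a i j (k:ℤ) = 0 ∧ a i j ((k:ℤ)+1) = 0 := by
        intro k
        induction k with
        | zero =>
          refine ⟨by exact_mod_cast ha0, ?_⟩
          have h0 := harec i j 0 le_rfl
          norm_num at h0
          rw [hainit i j, ha0] at h0
          simpa [ha0] using h0
        | succ k ih =>
          refine ⟨by exact_mod_cast ih.2, ?_⟩
          have h0 := harec i j ((k:ℤ)+1) (by omega)
          have e2 : (k:ℤ) + 1 - 1 = (k:ℤ) := by ring
          rw [e2, ih.1, ih.2] at h0
          push_cast
          rw [show (k:ℤ) + 1 + 1 = ((k:ℤ)+1) + 1 from rfl]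
          simpa using h0
      have hz := (hzero L).1
      rw [hz, ha0]
      norm_num
  -- Parseval
  have hpars : ∀ (k:ℤ) (j : Fin d), ∑ i, (a i j k)^2 = ∑ t, (Y k t j)^2 := by
    intro k j
    set y : EuclideanSpace ℝ (Fin n) := WithLp.toLp 2 (fun t => Y k t j) with hy
    have hrepr : ∀ i, b.repr y i = a i j k := by
      intro i
      rw [OrthonormalBasis.repr_apply_apply]
      simp only [PiLp.inner_apply, RCLike.inner_apply, conj_trivial]
      exact Finset.sum_congr rfl fun t _ => mul_comm _ _
    have hnorm : ‖b.repr y‖ = ‖y‖ := b.repr.norm_map y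
    rw [EuclideanSpace.norm_eq, EuclideanSpace.norm_eq] at hnorm
    have h1 : ∑ i, ‖b.repr y i‖^2 = ∑ t, ‖y t‖^2 := by
      have h2 := congrArg (fun z : ℝ => z ^ 2) hnorm
      simp only at h2
      rwa [Real.sq_sqrt (Finset.sum_nonneg fun i _ => sq_nonneg _),
        Real.sq_sqrt (Finset.sum_nonneg fun i _ => sq_nonneg _)] at h2
    calc ∑ i, (a i j k)^2 = ∑ i, ‖b.repr y i‖^2 := by
          apply Finset.sum_congr rfl; intro i _
          rw [hrepr i, Real.norm_eq_abs, sq_abs]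
      _ = ∑ t, ‖y t‖^2 := h1
      _ = ∑ t, (Y k t j)^2 := by
          apply Finset.sum_congr rfl; intro t _
          rw [Real.norm_eq_abs, sq_abs]
  -- combine
  have hsums : ∑ j, ∑ t, (Y (L:ℤ) t j)^2 ≤ 14 * (rate ^ L)^2 * ∑ j, ∑ t, (Y 0 t j)^2 := by
    calc ∑ j, ∑ t, (Y (L:ℤ) t j)^2 = ∑ j, ∑ i, (a i j (L:ℤ))^2 := by
          apply Finset.sum_congr rfl; intro j _; rw [hpars]
      _ ≤ ∑ j, ∑ i, 14 * (rate ^ L)^2 * (a i j 0)^2 := by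
          apply Finset.sum_le_sum; intro j _
          apply Finset.sum_le_sum; intro i _
          exact hbound i j
      _ = 14 * (rate ^ L)^2 * ∑ j, ∑ i, (a i j 0)^2 := by
          rw [Finset.mul_sum]; apply Finset.sum_congr rfl; intro j _
          rw [Finset.mul_sum]
      _ = 14 * (rate ^ L)^2 * ∑ j, ∑ t, (Y 0 t j)^2 := by
          congr 1; apply Finset.sum_congr rfl; intro j _; rw [hpars]
  have hYL : X (L:ℤ) - Xbar = Y (L:ℤ) := rfl
  have hY0 : X 0 - Xbar = Y 0 := rfl
  rw [hYL, hY0]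
  show Real.sqrt (∑ t, ∑ j, (Y (L:ℤ) t j)^2) ≤
    Real.sqrt 14 * rate ^ L * Real.sqrt (∑ t, ∑ j, (Y 0 t j)^2)
  rw [show (∑ t, ∑ j, (Y (L:ℤ) t j)^2) = ∑ j, ∑ t, (Y (L:ℤ) t j)^2 from Finset.sum_comm,
    show (∑ t, ∑ j, (Y 0 t j)^2) = ∑ j, ∑ t, (Y 0 t j)^2 from Finset.sum_comm]
  have h1 := Real.sqrt_le_sqrt hsums
  have h2 : Real.sqrt (14 * (rate ^ L)^2 * ∑ j, ∑ t, (Y 0 t j)^2)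
      = Real.sqrt 14 * rate ^ L * Real.sqrt (∑ j, ∑ t, (Y 0 t j)^2) := by
    rw [Real.sqrt_mul (by positivity), Real.sqrt_mul (by norm_num), Real.sqrt_sq (by positivity)]
  rw [h2] at h1
  exact h1
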